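/- (Viscosity supersolution property of the value function, part of Theorem 4.2.) For every (t,x) ∈ (0,T)×ℝ and every (q₀,p₀,P₀) in the parabolic subjet of V at (t,x), one has q₀ + inf over (q,π) ∈ [0,∞)×[0,∞) of G(t,x,q,π,p₀,P₀) ≤ 0. -/

import Mathlib

open Real Set Asymptotics Filter

section helpers

lemma key_aux {l : Filter ℝ} [l.NeBot] {u v : ℝ → ℝ} {c : ℝ}
    (hu : (fun s => max (u s) 0) =o[l] v)
    (hv : ∀ᶠ s in l, 0 < v s)
    (hc : (fun s => c * v s - u s) =o[l] v) : c ≤ 0 := by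
  by_contra hpos
  push_neg at hpos
  have h1 := hu.def (by positivity : (0:ℝ) < c/3)
  have h2 := hc.def (by positivity : (0:ℝ) < c/3)
  obtain ⟨s, H1, H2, H3⟩ := (h1.and (h2.and hv)).exists
  simp only [Real.norm_eq_abs] at H1 H2
  rw [abs_of_pos H3] at H1 H2
  have hb1 : max (u s) 0 ≤ c/3 * v s := (le_abs_self _).trans H1
  have hb2 : c * v s - u s ≤ c/3 * v s := (le_abs_self _).trans H2
  have := le_max_left (u s) 0
  nlinarith

lemma sq_littleO (x : ℝ) : (fun y : ℝ => (y - x)^2) =o[nhds x] (fun y => y - x) := by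
  have h1 : HasDerivAt (fun y : ℝ => (y - x)^2) 0 x := by
    have := ((hasDerivAt_id x).sub_const x).pow 2
    exact this.congr_deriv (by simp)
  have := hasDerivAt_iff_isLittleO.mp h1
  simpa using this

lemma q_le_of_subjet {t q₀ D : ℝ} {ψ : ℝ → ℝ} (hD : HasDerivAt ψ D t)
    (h1 : (fun s => max (ψ t + q₀*(s-t) - ψ s) 0) =o[nhdsWithin t (Ioi t)] (fun s => s - t)) :
    q₀ ≤ D := by
  have hkey : q₀ - D ≤ 0 := by
    refine key_aux h1 ?_ ?_
    · filter_upwards [self_mem_nhdsWithin] with s hs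
      exact sub_pos.mpr hs
    · have hd : (fun s => ψ s - ψ t - (s - t) • D) =o[nhdsWithin t (Ioi t)] (fun s => s - t) :=
        (hasDerivAt_iff_isLittleO.mp hD).mono nhdsWithin_le_nhds
      refine hd.congr_left fun s => ?_
      simp only [smul_eq_mul]; ring
  linarith

lemma deriv_eq_of_subjet {x p₀ P₀ p : ℝ} {χ : ℝ → ℝ}
    (hp : HasDerivAt χ p x)
    (h1 : (fun y => max (χ x + p₀*(y-x) + (1/2)*P₀*(y-x)^2 - χ y) 0)
       =o[nhdsWithin x (Ioi x)] (fun y => (y-x)^2))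
    (h2 : (fun y => max (χ x + p₀*(y-x) + (1/2)*P₀*(y-x)^2 - χ y) 0)
       =o[nhdsWithin x (Iio x)] (fun y => (y-x)^2)) : p₀ = p := by
  have hd := hasDerivAt_iff_isLittleO.mp hp
  have hsq := sq_littleO x
  have hle : p₀ - p ≤ 0 := by
    refine key_aux (h1.trans (hsq.mono nhdsWithin_le_nhds)) ?_ ?_
    · filter_upwards [self_mem_nhdsWithin] with y hy
      exact sub_pos.mpr hy
    · have hA : (fun y => (χ y - χ x - (y - x) • p) - (1/2)*P₀*(y-x)^2)
          =o[nhdsWithin x (Ioi x)] (fun y => y - x) := by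
        refine IsLittleO.sub (hd.mono nhdsWithin_le_nhds) ?_
        exact ((hsq.const_mul_left ((1:ℝ)/2*P₀)).mono nhdsWithin_le_nhds).congr_left
            fun y => by ring
      refine hA.congr_left fun y => ?_
      simp only [smul_eq_mul]; ring
  have hge : p - p₀ ≤ 0 := by
    have hsq' : (fun y : ℝ => (y - x)^2) =o[nhds x] (fun y => x - y) := by
      refine (sq_littleO x).neg_right.congr' EventuallyEq.rfl ?_
      filter_upwards with y; ring
    refine key_aux (h2.trans (hsq'.mono nhdsWithin_le_nhds)) ?_ ?_
    · filter_upwards [self_mem_nhdsWithin] with y hy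
      exact sub_pos.mpr hy
    · have hd' : (fun y => χ y - χ x - (y - x) • p) =o[nhds x] (fun y => x - y) := by
        refine hd.neg_right.congr' EventuallyEq.rfl ?_
        filter_upwards with y; ring
      have hA : (fun y => (χ y - χ x - (y - x) • p) - (1/2)*P₀*(y-x)^2)
          =o[nhdsWithin x (Iio x)] (fun y => x - y) := by
        refine IsLittleO.sub (hd'.mono nhdsWithin_le_nhds) ?_
        exact ((hsq'.const_mul_left ((1:ℝ)/2*P₀)).mono nhdsWithin_le_nhds).congr_left
            fun y => by ring
      refine hA.congr_left fun y => ?_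
      simp only [smul_eq_mul]; ring
  linarith

lemma P_le_of_subjet {x p₀ P₀ p Q : ℝ} {χ : ℝ → ℝ}
    (hq : ∀ᶠ y in nhds x, χ y = χ x + p*(y-x) + (1/2)*Q*(y-x)^2)
    (hp : p₀ = p)
    (h1 : (fun y => max (χ x + p₀*(y-x) + (1/2)*P₀*(y-x)^2 - χ y) 0)
       =o[nhdsWithin x (Ioi x)] (fun y => (y-x)^2)) : P₀ ≤ Q := by
  have hkey : (P₀ - Q)/2 ≤ 0 := by
    refine key_aux h1 ?_ ?_
    · filter_upwards [self_mem_nhdsWithin] with y hy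
      have : 0 < y - x := sub_pos.mpr hy
      positivity
    · refine (isLittleO_zero _ _).congr' ?_ EventuallyEq.rfl
      filter_upwards [hq.filter_mono nhdsWithin_le_nhds] with y hy
      rw [hy, hp]; ring
  linarith

lemma comp_temporal {T t x : ℝ} (ht : t ∈ Ioo (0:ℝ) T) {V : ℝ → ℝ → ℝ} {q₀ p₀ P₀ : ℝ}
    (h : (fun p : ℝ × ℝ =>
          max (V t x + q₀ * (p.1 - t) + p₀ * (p.2 - x)
            + (1 / 2) * P₀ * (p.2 - x) ^ 2 - V p.1 p.2) 0)
        =o[nhdsWithin (t, x) (Icc (0 : ℝ) T ×ˢ (univ : Set ℝ))]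
        (fun p : ℝ × ℝ => |p.1 - t| + |p.2 - x| ^ 2)) :
    (fun s => max (V t x + q₀*(s-t) - V s x) 0) =o[nhdsWithin t (Ioi t)] (fun s => s - t) := by
  have htend : Tendsto (fun s : ℝ => (s, x)) (nhdsWithin t (Ioi t))
      (nhdsWithin (t, x) (Icc (0 : ℝ) T ×ˢ (univ : Set ℝ))) := by
    rw [tendsto_nhdsWithin_iff]
    constructor
    · exact ((continuous_id.prodMk continuous_const).tendsto t).mono_left nhdsWithin_le_nhds
    · filter_upwards [Ioo_mem_nhdsGT_of_mem ⟨le_refl t, ht.2⟩] with s hs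
      exact ⟨⟨(ht.1.trans hs.1).le, hs.2.le⟩, mem_univ x⟩
  have hc := h.comp_tendsto htend
  simp only [Function.comp_def] at hc
  refine hc.congr' ?_ ?_
  · filter_upwards with s
    norm_num
  · filter_upwards [self_mem_nhdsWithin] with s hs
    have : 0 < s - t := sub_pos.mpr hs
    rw [abs_of_pos this]
    norm_num

lemma comp_spatial {T t x : ℝ} (ht : t ∈ Ioo (0:ℝ) T) {V : ℝ → ℝ → ℝ} {q₀ p₀ P₀ : ℝ}
    (h : (fun p : ℝ × ℝ =>
          max (V t x + q₀ * (p.1 - t) + p₀ * (p.2 - x)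
            + (1 / 2) * P₀ * (p.2 - x) ^ 2 - V p.1 p.2) 0)
        =o[nhdsWithin (t, x) (Icc (0 : ℝ) T ×ˢ (univ : Set ℝ))]
        (fun p : ℝ × ℝ => |p.1 - t| + |p.2 - x| ^ 2)) (s : Set ℝ) :
    (fun y => max (V t x + p₀*(y-x) + (1/2)*P₀*(y-x)^2 - V t y) 0)
      =o[nhdsWithin x s] (fun y => (y-x)^2) := by
  have htend : Tendsto (fun y : ℝ => (t, y)) (nhdsWithin x s)
      (nhdsWithin (t, x) (Icc (0 : ℝ) T ×ˢ (univ : Set ℝ))) := by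
    rw [tendsto_nhdsWithin_iff]
    constructor
    · exact ((continuous_const.prodMk continuous_id).tendsto x).mono_left nhdsWithin_le_nhds
    · filter_upwards with y
      exact ⟨⟨ht.1.le, ht.2.le⟩, mem_univ y⟩
  have hc := h.comp_tendsto htend
  simp only [Function.comp_def] at hc
  refine hc.congr' ?_ ?_
  · filter_upwards with y
    norm_num
  · filter_upwards with y
    rw [sub_self, abs_zero, sq_abs]
    norm_num

end helpers
set_option maxHeartbeats 4000000 in
theorem stmt_12
    (T r μ σ a b η θ d γ : ℝ)
    (hT : 0 < T) (hr : 0 < r) (hσ : 0 < σ) (ha : 0 < a) (hb : 0 < b)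
    (hη : 0 < η) (hμr : r < μ)
    (f : ℝ) (hf : f = a * θ - a * η + (d - γ) * r)
    (A₁ : ℝ) (hA₁ : A₁ = -(μ - r) ^ 2 / (2 * σ ^ 2) - a ^ 2 * η ^ 2 / (2 * b ^ 2))
    (g₁ : ℝ → ℝ) (hg₁ : ∀ t, g₁ t = f * (exp (r * (T - t)) - 1) / r)
    (G : ℝ → ℝ → ℝ → ℝ → ℝ → ℝ → ℝ)
    (hG : ∀ t x q pi p P, G t x q pi p P
      = p * (r * x + a * η * q + (μ - r) * pi + f)
        + (1 / 2) * P * (b ^ 2 * q ^ 2 + σ ^ 2 * pi ^ 2))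
    (V : ℝ → ℝ → ℝ)
    (hV : ∀ t x, V t x =
      if 0 ≤ exp (r * (T - t)) * x + g₁ t
      then (1 / 2) * (exp (r * (T - t)) * x + g₁ t) ^ 2
      else (1 / 2) * exp (2 * A₁ * (T - t)) * (exp (r * (T - t)) * x + g₁ t) ^ 2) :
    ∀ t x : ℝ, t ∈ Ioo (0 : ℝ) T → ∀ q₀ p₀ P₀ : ℝ,
      ((fun p : ℝ × ℝ =>
          max (V t x + q₀ * (p.1 - t) + p₀ * (p.2 - x)
            + (1 / 2) * P₀ * (p.2 - x) ^ 2 - V p.1 p.2) 0)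
        =o[nhdsWithin (t, x) (Icc (0 : ℝ) T ×ˢ (univ : Set ℝ))]
        (fun p : ℝ × ℝ => |p.1 - t| + |p.2 - x| ^ 2)) →
      ∀ ε : ℝ, 0 < ε → ∃ q pi : ℝ, 0 ≤ q ∧ 0 ≤ pi ∧ q₀ + G t x q pi p₀ P₀ < ε := by
  intro t x ht q₀ p₀ P₀ h ε hε
  have hμ : 0 < μ - r := sub_pos.mpr hμr
  have hE : (0:ℝ) < exp (r*(T-t)) := exp_pos _
  set E := exp (r*(T-t)) with hEdef
  set c₀ := exp (2*A₁*(T-t)) with hc₀def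
  have hc₀pos : (0:ℝ) < c₀ := by rw [hc₀def]; exact exp_pos _
  have hA₁neg : A₁ < 0 := by
    rw [hA₁]
    have h1 : 0 < (μ - r)^2 / (2*σ^2) := div_pos (pow_pos hμ 2) (by positivity)
    have h2 : 0 < a^2*η^2/(2*b^2) := by positivity
    have h3 : -(μ - r)^2 / (2*σ^2) = -((μ - r)^2/(2*σ^2)) := by ring
    rw [h3]; linarith
  have hc₀le1 : c₀ ≤ 1 := by
    rw [hc₀def]
    apply Real.exp_le_one_iff.mpr
    nlinarith [ht.2]
  set z := E * x + g₁ t with hzdef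
  set zfun : ℝ → ℝ := fun s => exp (r*(T-s))*x + f*(exp (r*(T-s))-1)/r with hzfun
  set cf : ℝ → ℝ := fun s => exp (2*A₁*(T-s)) with hcf
  have hzt : zfun t = z := by rw [hzfun, hzdef, hg₁ t, hEdef]
  have hcft : cf t = c₀ := by rw [hcf, hc₀def]
  -- derivatives of building blocks
  have hder1 : HasDerivAt (fun s : ℝ => r*(T-s)) (-r) t := by
    simpa using ((hasDerivAt_id t).const_sub T).const_mul r
  have hexp1 := hder1.exp
  have hdz : HasDerivAt zfun (-(E*(r*x+f))) t := by
    have h3 := (hexp1.mul_const x).add (((hexp1.sub_const 1).const_mul f).div_const r)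
    rw [hzfun]
    refine h3.congr_deriv ?_
    rw [hEdef]
    field_simp
    ring
  have hder2 : HasDerivAt (fun s : ℝ => 2*A₁*(T-s)) (-(2*A₁)) t := by
    simpa using ((hasDerivAt_id t).const_sub T).const_mul (2*A₁)
  have hdcf : HasDerivAt cf (-(2*A₁)*c₀) t := by
    rw [hcf, hc₀def]
    simpa [mul_comm] using hder2.exp
  -- the value function along the two coordinate slices
  have hψeq : ∀ s, V s x = if 0 ≤ zfun s then (1/2)*(zfun s)^2 else (1/2)*cf s*(zfun s)^2 := by
    intro s
    rw [hV, hg₁]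
  have hχeq : ∀ y, V t y =
      if 0 ≤ z + E*(y-x) then (1/2)*(z+E*(y-x))^2 else (1/2)*c₀*(z+E*(y-x))^2 := by
    intro y
    have hzy : E*y + g₁ t = z + E*(y-x) := by rw [hzdef]; ring
    rw [hV, hzy]
  have hVtx : V t x = if 0 ≤ z then (1/2)*z^2 else (1/2)*c₀*z^2 := by
    have := hχeq x
    simpa using this
  rcases lt_trichotomy z 0 with hzneg | hz0 | hzpos
  · -- case z < 0
    have hVtxv : V t x = (1/2)*c₀*z^2 := by rw [hVtx, if_neg (not_le.mpr hzneg)]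
    have hquad : ∀ᶠ y in nhds x,
        V t y = V t x + (c₀*E*z)*(y-x) + (1/2)*(c₀*E^2)*(y-x)^2 := by
      have hδpos : (0:ℝ) < (-z)/E := div_pos (by linarith) hE
      filter_upwards [eventually_abs_sub_lt x hδpos] with y hy
      obtain ⟨hy1, hy2⟩ := abs_lt.mp hy
      have h0 : ¬ (0 ≤ z + E*(y-x)) := by
        push_neg
        have h5 : E*(y-x) < E*((-z)/E) := by nlinarith
        rw [mul_div_cancel₀ _ (ne_of_gt hE)] at h5
        linarith
      rw [hχeq y, if_neg h0, hVtxv]; ring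
    have hdχ : HasDerivAt (fun y => V t y) (c₀*E*z) x := by
      have h1 := (hasDerivAt_id x).sub_const x
      have hpoly := ((h1.const_mul (c₀*E*z)).const_add (V t x)).add
        ((h1.pow 2).const_mul ((1:ℝ)/2*(c₀*E^2)))
      have hpoly' : HasDerivAt
          (fun y => V t x + (c₀*E*z)*(y-x) + (1/2)*(c₀*E^2)*(y-x)^2) (c₀*E*z) x := by
        convert hpoly using 1
        · rfl
        · rfl
        · rfl
        simp
      exact hpoly'.congr_of_eventuallyEq hquad
    have hp₀ : p₀ = c₀*E*z :=
      deriv_eq_of_subjet hdχ (comp_spatial ht h (Ioi x)) (comp_spatial ht h (Iio x))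
    have hP₀ : P₀ ≤ c₀*E^2 :=
      P_le_of_subjet hquad hp₀ (comp_spatial ht h (Ioi x))
    -- temporal derivative
    have hev : ∀ᶠ s in nhds t, zfun s < 0 := by
      have hc := hdz.continuousAt
      have hm : Iio (0:ℝ) ∈ nhds (zfun t) := by
        rw [hzt]; exact Iio_mem_nhds hzneg
      exact hc.eventually_mem hm
    have hψev : (fun s => V s x) =ᶠ[nhds t] (fun s => (1/2)*cf s*(zfun s)^2) := by
      filter_upwards [hev] with s hs
      rw [hψeq s, if_neg (not_le.mpr hs)]
    have hdψ : HasDerivAt (fun s => V s x)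
        (-A₁*c₀*z^2 + c₀*(z * -(E*(r*x+f)))) t := by
      have hmul := (hdcf.mul (hdz.pow 2)).const_mul ((1:ℝ)/2)
      have h2 : HasDerivAt (fun s => (1/2)*cf s*(zfun s)^2)
          (-A₁*c₀*z^2 + c₀*(z * -(E*(r*x+f)))) t := by
        convert hmul using 1
        · rfl
        · rfl
        · funext s; simp only [Pi.mul_apply, Pi.pow_apply]; ring
        · rw [Pi.pow_apply, hzt, hcft]; ring
      exact h2.congr_of_eventuallyEq hψev
    have hq₀ : q₀ ≤ -A₁*c₀*z^2 + c₀*(z * -(E*(r*x+f))) :=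
      q_le_of_subjet hdψ (comp_temporal ht h)
    have hp₀neg : p₀ < 0 := by
      rw [hp₀]
      have hce : 0 < c₀ * E := mul_pos hc₀pos hE
      nlinarith
    by_cases hP : 0 < P₀
    · -- interior optimum q* , π*
      refine ⟨(-p₀)*(a*η)/(P₀*b^2), (-p₀)*(μ-r)/(P₀*σ^2), ?_, ?_, ?_⟩
      · exact div_nonneg (mul_nonneg (neg_nonneg.mpr hp₀neg.le) (by positivity))
          (mul_nonneg hP.le (by positivity))
      · exact div_nonneg (mul_nonneg (neg_nonneg.mpr hp₀neg.le) hμ.le)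
          (mul_nonneg hP.le (by positivity))
      · rw [hG]
        have hGval : p₀ * (r*x + a*η*((-p₀)*(a*η)/(P₀*b^2)) + (μ-r)*((-p₀)*(μ-r)/(P₀*σ^2)) + f)
            + (1/2)*P₀*(b^2*((-p₀)*(a*η)/(P₀*b^2))^2 + σ^2*((-p₀)*(μ-r)/(P₀*σ^2))^2)
            = p₀*(r*x+f) - (p₀^2/P₀)*(a^2*η^2/(2*b^2) + (μ-r)^2/(2*σ^2)) := by
          field_simp
          ring
        rw [hGval]
        have hratio : c₀*z^2 ≤ p₀^2/P₀ := by
          rw [le_div_iff₀ hP]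
          have h1 : c₀*z^2*P₀ ≤ c₀*z^2*(c₀*E^2) :=
            mul_le_mul_of_nonneg_left hP₀ (mul_nonneg hc₀pos.le (sq_nonneg z))
          have h2 : c₀*z^2*(c₀*E^2) = p₀^2 := by rw [hp₀]; ring
          linarith
        have hSnn : (0:ℝ) ≤ a^2*η^2/(2*b^2) + (μ-r)^2/(2*σ^2) := by positivity
        have hsum : -A₁*c₀*z^2 ≤ (p₀^2/P₀)*(a^2*η^2/(2*b^2) + (μ-r)^2/(2*σ^2)) := by
          have hmono := mul_le_mul_of_nonneg_right hratio hSnn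
          have hA1 : -A₁*c₀*z^2 = c₀*z^2*(a^2*η^2/(2*b^2) + (μ-r)^2/(2*σ^2)) := by
            rw [hA₁]; ring
          rw [hA1]
          linarith
        have hcancel : c₀*(z * -(E*(r*x+f))) + (c₀*E*z)*(r*x+f) = 0 := by ring
        have hp₀rw : p₀*(r*x+f) = (c₀*E*z)*(r*x+f) := by rw [hp₀]
        clear_value E c₀ z zfun cf
        linarith
    · -- boundary: P₀ ≤ 0, send π → ∞
      push_neg at hP
      set C := q₀ + p₀*(r*x+f) with hC
      set δ := p₀*(μ-r) with hδdef
      have hδneg : δ < 0 := mul_neg_of_neg_of_pos hp₀neg hμ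
      set piv := max 0 ((ε - C)/δ + 1) with hpiv
      refine ⟨0, piv, le_refl 0, le_max_left _ _, ?_⟩
      have hπge : (ε - C)/δ + 1 ≤ piv := le_max_right _ _
      have hδπ : δ*piv < ε - C := by
        have h1 : δ*piv ≤ δ*((ε - C)/δ + 1) := mul_le_mul_of_nonpos_left hπge hδneg.le
        have h2 : δ*((ε - C)/δ + 1) = (ε - C) + δ := by
          rw [mul_add, mul_one, mul_div_cancel₀ _ hδneg.ne]
        rw [h2] at h1
        linarith
      rw [hG]
      have hexp2 : p₀ * (r*x + a*η*0 + (μ-r)*piv + f) = p₀*(r*x+f) + δ*piv := by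
        rw [hδdef]; ring
      have hquadneg : (1/2)*P₀*(b^2*0^2 + σ^2*piv^2) ≤ 0 := by
        have h1 : (0:ℝ) ≤ b^2*0^2 + σ^2*piv^2 := by positivity
        nlinarith
      rw [hexp2]
      have hCq : C = q₀ + p₀*(r*x+f) := hC
      clear_value E c₀ z zfun cf C piv
      linarith
  · -- case z = 0
    have hVtxv : V t x = 0 := by rw [hVtx, hz0]; norm_num
    have hχbd : ∀ y, 0 ≤ V t y ∧ V t y ≤ (1/2)*E^2*(y-x)^2 := by
      intro y
      rw [hχeq y, hz0, zero_add]
      split_ifs with h0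
      · exact ⟨by positivity, by nlinarith [sq_nonneg (E*(y-x))]⟩
      · refine ⟨mul_nonneg (mul_nonneg (by norm_num) hc₀pos.le) (sq_nonneg _), ?_⟩
        nlinarith [mul_nonneg (sub_nonneg.mpr hc₀le1) (sq_nonneg (E*(y-x)))]
    have hdχ : HasDerivAt (fun y => V t y) 0 x := by
      rw [hasDerivAt_iff_isLittleO]
      have hsimp : (fun y => V t y - V t x - (y - x) • (0:ℝ)) = fun y => V t y := by
        funext y; rw [hVtxv]; simp
      rw [hsimp]
      refine IsBigO.trans_isLittleO ?_ (sq_littleO x)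
      rw [isBigO_iff]
      refine ⟨(1/2)*E^2, Filter.Eventually.of_forall fun y => ?_⟩
      obtain ⟨hy1, hy2⟩ := hχbd y
      rw [Real.norm_eq_abs, Real.norm_eq_abs, abs_of_nonneg hy1,
        abs_of_nonneg (sq_nonneg (y-x))]
      exact hy2
    have hp₀ : p₀ = 0 :=
      deriv_eq_of_subjet hdχ (comp_spatial ht h (Ioi x)) (comp_spatial ht h (Iio x))
    -- temporal
    have hZO : zfun =O[nhds t] (fun s => s - t) := by
      have hb := hdz.isBigO_sub
      have h0 : zfun t = 0 := by rw [hzt, hz0]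
      simpa [h0] using hb
    have hZO2 : (fun s => (zfun s)^2) =O[nhds t] (fun s => (s-t)^2) := by
      simp only [pow_two]
      exact hZO.mul hZO
    have hψO : (fun s => V s x) =O[nhds t] (fun s => (zfun s)^2) := by
      rw [isBigO_iff]
      refine ⟨1/2, ?_⟩
      filter_upwards [Ioo_mem_nhds ht.1 ht.2] with s hs
      have hcf1 : cf s ≤ 1 := by
        show exp (2*A₁*(T-s)) ≤ 1
        apply Real.exp_le_one_iff.mpr
        nlinarith [hs.2]
      have hcf0 : (0:ℝ) < cf s := by
        show (0:ℝ) < exp (2*A₁*(T-s))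
        exact exp_pos _
      rw [hψeq s, Real.norm_eq_abs, Real.norm_eq_abs, abs_of_nonneg (sq_nonneg (zfun s))]
      split_ifs with h0
      · rw [abs_of_nonneg (by positivity)]
      · rw [abs_of_nonneg (mul_nonneg (mul_nonneg (by norm_num) hcf0.le) (sq_nonneg _))]
        nlinarith [sq_nonneg (zfun s)]
    have hdψ : HasDerivAt (fun s => V s x) 0 t := by
      rw [hasDerivAt_iff_isLittleO]
      have hsimp : (fun s => V s x - V t x - (s - t) • (0:ℝ)) = fun s => V s x := by
        funext s; rw [hVtxv]; simp
      rw [hsimp]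
      exact (hψO.trans hZO2).trans_isLittleO (sq_littleO t)
    have hq₀ : q₀ ≤ 0 := q_le_of_subjet hdψ (comp_temporal ht h)
    refine ⟨0, 0, le_refl 0, le_refl 0, ?_⟩
    rw [hG, hp₀]
    clear_value E c₀ z zfun cf
    norm_num
    linarith
  · -- case z > 0
    have hVtxv : V t x = (1/2)*z^2 := by rw [hVtx, if_pos hzpos.le]
    have hquad : ∀ᶠ y in nhds x,
        V t y = V t x + (E*z)*(y-x) + (1/2)*E^2*(y-x)^2 := by
      have hδpos : (0:ℝ) < z/E := div_pos hzpos hE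
      filter_upwards [eventually_abs_sub_lt x hδpos] with y hy
      obtain ⟨hy1, hy2⟩ := abs_lt.mp hy
      have h0 : 0 ≤ z + E*(y-x) := by
        have h5 : E*(-(z/E)) < E*(y-x) := by nlinarith
        have h6 : E*(-(z/E)) = -z := by
          rw [show E*(-(z/E)) = -(E*(z/E)) from by ring, mul_div_cancel₀ _ (ne_of_gt hE)]
        rw [h6] at h5
        linarith
      rw [hχeq y, if_pos h0, hVtxv]; ring
    have hdχ : HasDerivAt (fun y => V t y) (E*z) x := by
      have h1 := (hasDerivAt_id x).sub_const x
      have hpoly := ((h1.const_mul (E*z)).const_add (V t x)).add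
        ((h1.pow 2).const_mul ((1:ℝ)/2*E^2))
      have hpoly' : HasDerivAt
          (fun y => V t x + (E*z)*(y-x) + (1/2)*E^2*(y-x)^2) (E*z) x := by
        convert hpoly using 1
        · rfl
        · rfl
        · rfl
        simp
      exact hpoly'.congr_of_eventuallyEq hquad
    have hp₀ : p₀ = E*z :=
      deriv_eq_of_subjet hdχ (comp_spatial ht h (Ioi x)) (comp_spatial ht h (Iio x))
    -- temporal derivative
    have hev : ∀ᶠ s in nhds t, 0 < zfun s := by
      have hc := hdz.continuousAt
      have hm : Ioi (0:ℝ) ∈ nhds (zfun t) := by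
        rw [hzt]; exact Ioi_mem_nhds hzpos
      exact hc.eventually_mem hm
    have hψev : (fun s => V s x) =ᶠ[nhds t] (fun s => (1/2)*(zfun s)^2) := by
      filter_upwards [hev] with s hs
      rw [hψeq s, if_pos hs.le]
    have hdψ : HasDerivAt (fun s => V s x) (z * -(E*(r*x+f))) t := by
      have hmul := (hdz.pow 2).const_mul ((1:ℝ)/2)
      have h2 : HasDerivAt (fun s => (1/2)*(zfun s)^2) (z * -(E*(r*x+f))) t := by
        convert hmul using 1
        · rfl
        · rfl
        · rfl
        rw [hzt]
        ring
      exact h2.congr_of_eventuallyEq hψev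
    have hq₀ : q₀ ≤ z * -(E*(r*x+f)) :=
      q_le_of_subjet hdψ (comp_temporal ht h)
    refine ⟨0, 0, le_refl 0, le_refl 0, ?_⟩
    rw [hG, hp₀]
    have hq₀' : q₀ ≤ -(E*z*(r*x+f)) := by nlinarith [hq₀]
    clear_value E c₀ z zfun cf
    linarith
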